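/- Let β ∈ [0,2] and let f, f₀ : [0,1] → [1,2] be measurable. If u(x; β, f) = u(x; 1, f₀) for almost every x ∈ [0,1], then β = 1 and f(x) = f₀(x) for almost every x ∈ [0,1]. (Identifiability of the parameter and of the unknown mechanism in the SemiPDE model of Example 3, a consequence of the stability condition.) -/

import Mathlib

open MeasureTheory Set intervalIntegral Filter Topology
/-- The solution component `v(x; β, f) = ∫_0^x e^{β(x−s)} e^s f(s) ds`. -/
noncomputable def v (β : ℝ) (f : ℝ → ℝ) (x : ℝ) : ℝ :=
  ∫ s in (0:ℝ)..x, Real.exp (β * (x - s)) * Real.exp s * f s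

/-- The solution `u(x; β, f) = (v(x; β, f), v(x; 2β, f))` of the SemiPDE model of Example 3. -/
noncomputable def u (β : ℝ) (f : ℝ → ℝ) (x : ℝ) : ℝ × ℝ :=
  (v β f x, v (2 * β) f x)

lemma abs_exp_sub_exp {a b : ℝ} (ha : a ≤ 3) (hb : b ≤ 3) :
    |Real.exp a - Real.exp b| ≤ Real.exp 3 * |a - b| := by
  wlog h : b ≤ a generalizing a b
  · rw [abs_sub_comm, abs_sub_comm a b]; exact this hb ha (le_of_not_ge h)
  rw [abs_of_nonneg (sub_nonneg.2 (Real.exp_le_exp.2 h)), abs_of_nonneg (sub_nonneg.2 h)]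
  have h3 : Real.exp b = Real.exp a * Real.exp (b - a) := by
    rw [← Real.exp_add]; ring_nf
  have h4 : Real.exp a ≤ Real.exp 3 := Real.exp_le_exp.2 ha
  nlinarith [Real.exp_pos a, Real.add_one_le_exp (b - a), sub_nonneg.2 h]

lemma uIcc_sub {a b : ℝ} (ha : a ∈ Icc (0:ℝ) 1) (hb' : b ∈ Icc (0:ℝ) 1) :
    uIoc a b ⊆ Icc (0:ℝ) 1 :=
  uIoc_subset_uIcc.trans (uIcc_subset_Icc ha hb')

lemma II {g : ℝ → ℝ} {C : ℝ} (hg : Measurable g) (hb : ∀ s ∈ Icc (0:ℝ) 1, |g s| ≤ C)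
    {a b : ℝ} (ha : a ∈ Icc (0:ℝ) 1) (hb' : b ∈ Icc (0:ℝ) 1) :
    IntervalIntegrable g volume a b := by
  rw [intervalIntegrable_iff]
  have hsub : uIoc a b ⊆ Icc (0:ℝ) 1 := uIcc_sub ha hb'
  refine Measure.integrableOn_of_bounded ((measure_mono hsub).trans_lt measure_Icc_lt_top).ne
    hg.aestronglyMeasurable ((ae_restrict_iff' measurableSet_uIoc).2
      (ae_of_all _ fun s hs => hb s (hsub hs)))

lemma exp_mul_bound {f : ℝ → ℝ} (hfr : ∀ s ∈ Icc (0:ℝ) 1, f s ∈ Icc (1:ℝ) 2)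
    {μ : ℝ} (hμ : |μ| ≤ 3) : ∀ s ∈ Icc (0:ℝ) 1, |Real.exp (μ*s) * f s| ≤ Real.exp 3 * 2 := by
  intro s hs
  rw [abs_mul, abs_of_nonneg (Real.exp_pos _).le]
  have h1 : μ * s ≤ 3 := by
    calc μ * s ≤ |μ * s| := le_abs_self _
    _ = |μ| * |s| := abs_mul _ _
    _ ≤ 3 * 1 := by
        apply mul_le_mul hμ (by rw [abs_of_nonneg hs.1]; exact hs.2) (abs_nonneg _) (by norm_num)
    _ = 3 := by norm_num
  have h2 : |f s| ≤ 2 := by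
    have := hfr s hs; rw [abs_of_nonneg (by linarith [this.1] : (0:ℝ) ≤ f s)]; exact this.2
  exact mul_le_mul (Real.exp_le_exp.2 h1) h2 (abs_nonneg _) (Real.exp_pos _).le

lemma exp_mul_measurable {f : ℝ → ℝ} (hf : Measurable f) (μ : ℝ) :
    Measurable (fun s => Real.exp (μ*s) * f s) :=
  ((measurable_id.const_mul μ).exp).mul hf

/-- Continuity (along a filter) of a primitive. -/
lemma tendsto_prim {f₀ : ℝ → ℝ} (hm : Measurable f₀)
    (hr : ∀ s ∈ Icc (0:ℝ) 1, f₀ s ∈ Icc (1:ℝ) 2) {ν : ℝ} (hν : |ν| ≤ 3)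
    {x : ℝ} (hx : x ∈ Icc (0:ℝ) 1) {l : Filter ℝ} (hl : l ≤ 𝓝[Icc (0:ℝ) 1] x) :
    Tendsto (fun y => ∫ s in (0:ℝ)..y, Real.exp (ν*s) * f₀ s) l
      (𝓝 (∫ s in (0:ℝ)..x, Real.exp (ν*s) * f₀ s)) := by
  have h0 : (0:ℝ) ∈ Icc (0:ℝ) 1 := by norm_num
  have key : ∀ y ∈ Icc (0:ℝ) 1,
      ‖(∫ s in (0:ℝ)..y, Real.exp (ν*s) * f₀ s) - ∫ s in (0:ℝ)..x, Real.exp (ν*s) * f₀ s‖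
        ≤ (Real.exp 3 * 2) * |y - x| := by
    intro y hy
    rw [integral_interval_sub_left (II (exp_mul_measurable hm ν) (exp_mul_bound hr hν) h0 hy)
      (II (exp_mul_measurable hm ν) (exp_mul_bound hr hν) h0 hx)]
    exact intervalIntegral.norm_integral_le_of_norm_le_const
      (fun s hs => exp_mul_bound hr hν s (uIcc_sub hx hy hs))
  have hmem : ∀ᶠ y in l, y ∈ Icc (0:ℝ) 1 := hl self_mem_nhdsWithin
  have htend : Tendsto (fun y => (Real.exp 3 * 2) * |y - x|) l (𝓝 0) := by
    have : Tendsto (fun y : ℝ => (Real.exp 3 * 2) * |y - x|) (𝓝 x) (𝓝 0) := by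
      have : Continuous fun y : ℝ => (Real.exp 3 * 2) * |y - x| := by continuity
      simpa using this.tendsto x
    exact this.mono_left (hl.trans nhdsWithin_le_nhds)
  have := squeeze_zero_norm' (hmem.mono fun y hy => key y hy) htend
  have h2 := this.add_const (∫ s in (0:ℝ)..x, Real.exp (ν*s) * f₀ s)
  simpa using h2

lemma mul_le_three {τ s : ℝ} (hτ : |τ| ≤ 3) (hs : s ∈ Icc (0:ℝ) 1) : τ * s ≤ 3 := by
  calc τ * s ≤ |τ * s| := le_abs_self _
  _ = |τ| * |s| := abs_mul _ _
  _ ≤ 3 * 1 := mul_le_mul hτ (by rw [abs_of_nonneg hs.1]; exact hs.2) (abs_nonneg _) (by norm_num)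
  _ = 3 := by norm_num

lemma abs_f_le {f : ℝ → ℝ} (hfr : ∀ s ∈ Icc (0:ℝ) 1, f s ∈ Icc (1:ℝ) 2) :
    ∀ s ∈ Icc (0:ℝ) 1, |f s| ≤ 2 := fun s hs => by
  have := hfr s hs
  rw [abs_of_nonneg (by linarith [this.1] : (0:ℝ) ≤ f s)]; exact this.2

/-- Key quotient-difference tendsto lemma. -/
lemma tendsto_A {f f₀ : ℝ → ℝ} (hfm : Measurable f) (hf₀m : Measurable f₀)
    (hfr : ∀ s ∈ Icc (0:ℝ) 1, f s ∈ Icc (1:ℝ) 2)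
    (hf₀r : ∀ s ∈ Icc (0:ℝ) 1, f₀ s ∈ Icc (1:ℝ) 2)
    {μ ν : ℝ} (κ : ℝ) (hμ : |μ| ≤ 3) (hν : |ν| ≤ 3)
    {x : ℝ} (hx : x ∈ Icc (0:ℝ) 1) {l : Filter ℝ} (hl : l ≤ 𝓝[Ioc x 1] x)
    {G : ℝ → ℝ} {g0 : ℝ} (hG : Tendsto G l (𝓝 g0))
    (hL : ∀ᶠ y in l, (∫ s in x..y, Real.exp (μ*s) * f s)
        - Real.exp ((μ-ν)*x) * ∫ s in x..y, Real.exp (ν*s) * f₀ s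
        = (Real.exp (κ*y) - Real.exp (κ*x)) * G y) :
    Tendsto (fun y => ((∫ s in x..y, f s) - ∫ s in x..y, f₀ s) / (y - x)) l
      (𝓝 (Real.exp (-(μ*x)) * (κ * Real.exp (κ*x) * g0))) := by
  have hmem : ∀ᶠ y in l, y ∈ Ioc x 1 := hl self_mem_nhdsWithin
  have hlx : l ≤ 𝓝 x := hl.trans nhdsWithin_le_nhds
  have hIcc : ∀ y ∈ Ioc x 1, y ∈ Icc (0:ℝ) 1 := fun y hy => ⟨hx.1.trans hy.1.le, hy.2⟩
  set T1 : ℝ → ℝ := fun y => (Real.exp (κ*y) - Real.exp (κ*x)) / (y - x) with hT1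
  set T2 : ℝ → ℝ := fun y =>
    (∫ s in x..y, (Real.exp (μ*s) - Real.exp (μ*x)) * f s) / (y - x) with hT2
  set T3 : ℝ → ℝ := fun y =>
    (∫ s in x..y, (Real.exp (ν*s) - Real.exp (ν*x)) * f₀ s) / (y - x) with hT3
  -- limit of T1
  have hT1lim : Tendsto T1 l (𝓝 (Real.exp (κ*x) * κ)) := by
    have hd : HasDerivAt (fun t => Real.exp (κ*t)) (Real.exp (κ*x) * κ) x := by
      simpa using ((hasDerivAt_id x).const_mul κ).exp
    have h1 := hasDerivAt_iff_tendsto_slope.1 hd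
    have hmono : l ≤ 𝓝[≠] x := le_trans hl (nhdsWithin_mono x (fun y hy => ne_of_gt hy.1))
    exact (h1.mono_left hmono).congr fun y => slope_def_field _ x y
  -- generic: T2-type terms tend to zero
  have key : ∀ (g : ℝ → ℝ) (τ : ℝ), Measurable g → (∀ s ∈ Icc (0:ℝ) 1, g s ∈ Icc (1:ℝ) 2) →
      |τ| ≤ 3 →
      Tendsto (fun y => (∫ s in x..y, (Real.exp (τ*s) - Real.exp (τ*x)) * g s) / (y - x)) l
        (𝓝 0) := by
    intro g τ hgm hgr hτ
    have hbd : ∀ᶠ y in l, ‖(∫ s in x..y, (Real.exp (τ*s) - Real.exp (τ*x)) * g s) / (y - x)‖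
        ≤ (Real.exp 3 * 3 * 2) * (y - x) := by
      filter_upwards [hmem] with y hy
      have hyx : 0 < y - x := sub_pos.2 hy.1
      have hnorm : ‖∫ s in x..y, (Real.exp (τ*s) - Real.exp (τ*x)) * g s‖
          ≤ (Real.exp 3 * 3 * 2) * (y - x) * |y - x| := by
        apply intervalIntegral.norm_integral_le_of_norm_le_const
        intro s hs
        have hs' : s ∈ Icc (0:ℝ) 1 := uIcc_sub hx (hIcc y hy) hs
        have hsxy : s ∈ Ioc x y := by
          rwa [uIoc_of_le hy.1.le] at hs
        have h1 : |Real.exp (τ*s) - Real.exp (τ*x)| ≤ Real.exp 3 * |τ*s - τ*x| :=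
          abs_exp_sub_exp (mul_le_three hτ hs') (mul_le_three hτ hx)
        have h2 : |τ*s - τ*x| ≤ 3 * (y - x) := by
          rw [← mul_sub, abs_mul]
          have : |s - x| ≤ y - x := by
            rw [abs_of_nonneg (by linarith [hsxy.1] : (0:ℝ) ≤ s - x)]
            linarith [hsxy.2]
          exact mul_le_mul hτ this (abs_nonneg _) (by norm_num)
        have h3 : |g s| ≤ 2 := abs_f_le hgr s hs'
        calc ‖(Real.exp (τ*s) - Real.exp (τ*x)) * g s‖
            = |Real.exp (τ*s) - Real.exp (τ*x)| * |g s| := abs_mul _ _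
          _ ≤ (Real.exp 3 * (3 * (y - x))) * 2 := by
              apply mul_le_mul _ h3 (abs_nonneg _) (by positivity)
              exact h1.trans (mul_le_mul_of_nonneg_left h2 (Real.exp_pos 3).le)
          _ = Real.exp 3 * 3 * 2 * (y - x) := by ring
      rw [norm_div, Real.norm_eq_abs (y - x), abs_of_pos hyx, div_le_iff₀ hyx]
      calc ‖∫ s in x..y, (Real.exp (τ*s) - Real.exp (τ*x)) * g s‖
          ≤ (Real.exp 3 * 3 * 2) * (y - x) * |y - x| := hnorm
        _ = (Real.exp 3 * 3 * 2) * (y - x) * (y - x) := by rw [abs_of_pos hyx]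
    have htend : Tendsto (fun y => (Real.exp 3 * 3 * 2) * (y - x)) l (𝓝 0) := by
      have hc : Continuous fun y : ℝ => (Real.exp 3 * 3 * 2) * (y - x) := by continuity
      have := hc.tendsto x
      simp only [sub_self, mul_zero] at this
      exact this.mono_left hlx
    exact squeeze_zero_norm' hbd htend
  have hT2lim : Tendsto T2 l (𝓝 0) := key f μ hfm hfr hμ
  have hT3lim : Tendsto T3 l (𝓝 0) := key f₀ ν hf₀m hf₀r hν
  -- combined limit
  have hB : Tendsto (fun y => Real.exp (-(μ*x)) *
      (T1 y * G y - T2 y + Real.exp ((μ-ν)*x) * T3 y)) l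
      (𝓝 (Real.exp (-(μ*x)) * (Real.exp (κ*x) * κ * g0 - 0 + Real.exp ((μ-ν)*x) * 0))) :=
    (((hT1lim.mul hG).sub hT2lim).add (hT3lim.const_mul _)).const_mul _
  -- eventual equality with A
  have heq : ∀ᶠ y in l, Real.exp (-(μ*x)) *
      (T1 y * G y - T2 y + Real.exp ((μ-ν)*x) * T3 y)
      = ((∫ s in x..y, f s) - ∫ s in x..y, f₀ s) / (y - x) := by
    filter_upwards [hmem, hL] with y hy hLy
    have hyI : y ∈ Icc (0:ℝ) 1 := hIcc y hy
    have hyx : y - x ≠ 0 := sub_ne_zero.2 (ne_of_gt hy.1)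
    have hIf : IntervalIntegrable (fun s => Real.exp (μ*s) * f s) volume x y :=
      II (exp_mul_measurable hfm μ) (exp_mul_bound hfr hμ) hx hyI
    have hIf0 : IntervalIntegrable (fun s => Real.exp (ν*s) * f₀ s) volume x y :=
      II (exp_mul_measurable hf₀m ν) (exp_mul_bound hf₀r hν) hx hyI
    have hIfp : IntervalIntegrable f volume x y := II hfm (abs_f_le hfr) hx hyI
    have hIf0p : IntervalIntegrable f₀ volume x y := II hf₀m (abs_f_le hf₀r) hx hyI
    have e2 : ∫ s in x..y, (Real.exp (μ*s) - Real.exp (μ*x)) * f s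
        = (∫ s in x..y, Real.exp (μ*s) * f s) - Real.exp (μ*x) * ∫ s in x..y, f s := by
      rw [← intervalIntegral.integral_const_mul,
        ← intervalIntegral.integral_sub hIf (hIfp.const_mul _)]
      exact intervalIntegral.integral_congr fun s _ => by ring
    have e3 : ∫ s in x..y, (Real.exp (ν*s) - Real.exp (ν*x)) * f₀ s
        = (∫ s in x..y, Real.exp (ν*s) * f₀ s) - Real.exp (ν*x) * ∫ s in x..y, f₀ s := by
      rw [← intervalIntegral.integral_const_mul,
        ← intervalIntegral.integral_sub hIf0 (hIf0p.const_mul _)]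
      exact intervalIntegral.integral_congr fun s _ => by ring
    rw [hT1, hT2, hT3]
    simp only []
    rw [e2, e3, div_mul_eq_mul_div, hLy.symm, Real.exp_neg,
      show (μ-ν)*x = μ*x - ν*x by ring, Real.exp_sub]
    field_simp
    ring
  have := hB.congr' heq
  convert this using 2
  ring

lemma exists_mem {E : Set ℝ} (hE : volume.restrict (Icc (0:ℝ) 1) Eᶜ = 0)
    {a b : ℝ} (ha : 0 ≤ a) (hb : b ≤ 1) (hab : a < b) : ∃ y ∈ E, y ∈ Ioo a b := by
  by_contra h
  push_neg at h
  have hsub : Ioo a b ⊆ Eᶜ := fun y hy => fun hyE => h y hyE hy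
  have h0 : volume.restrict (Icc (0:ℝ) 1) (Ioo a b) = 0 :=
    measure_mono_null hsub hE
  rw [Measure.restrict_apply measurableSet_Ioo,
    inter_eq_self_of_subset_left (Ioo_subset_Icc_self.trans (Icc_subset_Icc ha hb)),
    Real.volume_Ioo] at h0
  exact absurd h0 (by simp [hab, sub_pos.2 hab])

lemma cluster_right {E : Set ℝ} (hE : volume.restrict (Icc (0:ℝ) 1) Eᶜ = 0)
    {x : ℝ} (hx : x ∈ Ico (0:ℝ) 1) : (𝓝[E ∩ Ioc x 1] x).NeBot := by
  rw [← mem_closure_iff_nhdsWithin_neBot, Metric.mem_closure_iff]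
  intro ε hε
  obtain ⟨y, hyE, hy⟩ := exists_mem hE hx.1 (min_le_right (x+ε) 1)
    (lt_min (by linarith) hx.2)
  refine ⟨y, ⟨hyE, hy.1, le_of_lt (lt_of_lt_of_le hy.2 (min_le_right _ _))⟩, ?_⟩
  rw [Real.dist_eq, abs_of_nonpos (by linarith [hy.1])]
  have := lt_min_iff.1 hy.2
  linarith [this.1]

lemma cluster_left {E : Set ℝ} (hE : volume.restrict (Icc (0:ℝ) 1) Eᶜ = 0)
    {x : ℝ} (hx : x ∈ Ioc (0:ℝ) 1) : (𝓝[E ∩ Ioo 0 x] x).NeBot := by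
  rw [← mem_closure_iff_nhdsWithin_neBot, Metric.mem_closure_iff]
  intro ε hε
  obtain ⟨y, hyE, hy⟩ := exists_mem (a := max (x-ε) 0) (b := x) hE (le_max_right _ _) hx.2
    (max_lt (by linarith) hx.1)
  refine ⟨y, ⟨hyE, lt_of_le_of_lt (le_max_right _ _) hy.1, hy.2⟩, ?_⟩
  rw [Real.dist_eq, abs_of_nonneg (by linarith [hy.2])]
  have := max_lt_iff.1 hy.1
  linarith [this.1]

lemma final_ae {f f₀ : ℝ → ℝ} (hfm : Measurable f) (hf₀m : Measurable f₀)
    (hfr : ∀ s ∈ Icc (0:ℝ) 1, f s ∈ Icc (1:ℝ) 2)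
    (hf₀r : ∀ s ∈ Icc (0:ℝ) 1, f₀ s ∈ Icc (1:ℝ) 2)
    (hP : ∀ t ∈ Icc (0:ℝ) 1, (∫ s in (0:ℝ)..t, f s) = ∫ s in (0:ℝ)..t, f₀ s) :
    ∀ᵐ x ∂(volume.restrict (Icc (0:ℝ) 1)), f x = f₀ x := by
  set ρ := volume.restrict (Icc (0:ℝ) 1) with hρ
  -- boundedness of the lintegrals
  have hbound : ∀ g : ℝ → ℝ, (∀ s ∈ Icc (0:ℝ) 1, g s ∈ Icc (1:ℝ) 2) →
      (∫⁻ s, ENNReal.ofReal (g s) ∂ρ) ≤ 2 := by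
    intro g hgr
    have h1 : (∫⁻ s, ENNReal.ofReal (g s) ∂ρ) ≤ ∫⁻ _ : ℝ, (2 : ENNReal) ∂ρ := by
      apply lintegral_mono_ae
      filter_upwards [ae_restrict_mem measurableSet_Icc] with s hs
      calc ENNReal.ofReal (g s) ≤ ENNReal.ofReal 2 := ENNReal.ofReal_le_ofReal (hgr s hs).2
        _ = 2 := by norm_num
    calc (∫⁻ s, ENNReal.ofReal (g s) ∂ρ) ≤ ∫⁻ _ : ℝ, (2 : ENNReal) ∂ρ := h1
      _ = 2 * ρ univ := lintegral_const 2
      _ = 2 * 1 := by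
          rw [hρ, Measure.restrict_apply_univ, Real.volume_Icc]; norm_num
      _ = 2 := by norm_num
  set μ1 := ρ.withDensity (fun s => ENNReal.ofReal (f s)) with hμ1
  set μ2 := ρ.withDensity (fun s => ENNReal.ofReal (f₀ s)) with hμ2
  haveI : IsFiniteMeasure μ1 := by
    constructor
    rw [hμ1, withDensity_apply _ MeasurableSet.univ, Measure.restrict_univ]
    exact lt_of_le_of_lt (hbound f hfr) (by norm_num)
  -- compute μ (Iic t) for withDensity measures
  have hcomp : ∀ (g : ℝ → ℝ), Measurable g → (∀ s ∈ Icc (0:ℝ) 1, g s ∈ Icc (1:ℝ) 2) →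
      ∀ t : ℝ, (ρ.withDensity (fun s => ENNReal.ofReal (g s))) (Iic t)
        = ENNReal.ofReal (∫ s in (0:ℝ)..(min t 1 ⊔ 0), g s) := by
    intro g hgm hgr t
    rw [withDensity_apply _ measurableSet_Iic, hρ, Measure.restrict_restrict measurableSet_Iic]
    have hset : Iic t ∩ Icc (0:ℝ) 1 = Icc 0 (min t 1) := by
      ext s; simp only [mem_inter_iff, mem_Iic, mem_Icc, le_min_iff]; tauto
    rw [hset]
    rcases lt_or_ge (min t 1) 0 with hm | hm
    · rw [Icc_eq_empty (by linarith : ¬ (0:ℝ) ≤ min t 1), sup_of_le_right hm.le]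
      simp
    · have hm1 : min t 1 ∈ Icc (0:ℝ) 1 := ⟨hm, min_le_right _ _⟩
      rw [sup_of_le_left hm]
      have hae : Icc (0:ℝ) (min t 1) =ᵐ[volume] Ioc (0:ℝ) (min t 1) :=
        (Ioc_ae_eq_Icc).symm
      rw [setLIntegral_congr hae]
      have hint : IntegrableOn g (Ioc 0 (min t 1)) volume := by
        have h1 := II hgm (abs_f_le hgr) (by norm_num : (0:ℝ) ∈ Icc (0:ℝ) 1) hm1
        rwa [intervalIntegrable_iff, uIoc_of_le hm] at h1
      have hnn : 0 ≤ᵐ[volume.restrict (Ioc 0 (min t 1))] g := by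
        filter_upwards [ae_restrict_mem measurableSet_Ioc] with s hs
        exact le_trans zero_le_one (hgr s ⟨hs.1.le, hs.2.trans hm1.2⟩).1
      rw [← ofReal_integral_eq_lintegral_ofReal hint hnn,
        ← intervalIntegral.integral_of_le hm]
  have hIic : ∀ t : ℝ, μ1 (Iic t) = μ2 (Iic t) := by
    intro t
    rw [hμ1, hμ2, hcomp f hfm hfr t, hcomp f₀ hf₀m hf₀r t]
    congr 1
    apply hP
    rcases lt_or_ge (min t 1) 0 with hm | hm
    · rw [sup_of_le_right hm.le]; norm_num
    · rw [sup_of_le_left hm]; exact ⟨hm, min_le_right _ _⟩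
  have hμeq : μ1 = μ2 := Measure.ext_of_Iic μ1 μ2 hIic
  have hae := (withDensity_eq_iff (hfm.ennreal_ofReal.aemeasurable)
    (hf₀m.ennreal_ofReal.aemeasurable)
    (lt_of_le_of_lt (hbound f hfr) (by norm_num)).ne).1 hμeq
  filter_upwards [hae, ae_restrict_mem measurableSet_Icc] with s h1 h2
  have hf1 : (0:ℝ) ≤ f s := le_trans zero_le_one (hfr s h2).1
  have hf2 : (0:ℝ) ≤ f₀ s := le_trans zero_le_one (hf₀r s h2).1
  exact (ENNReal.ofReal_eq_ofReal_iff hf1 hf2).1 h1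
/-- Factored form of `v`. -/
lemma v_eq (β' : ℝ) (g : ℝ → ℝ) (y : ℝ) :
    v β' g y = Real.exp (β'*y) * ∫ s in (0:ℝ)..y, Real.exp ((1-β')*s) * g s := by
  unfold v
  rw [← intervalIntegral.integral_const_mul]
  apply intervalIntegral.integral_congr
  intro s _
  show Real.exp (β'*(y-s)) * Real.exp s * g s = Real.exp (β'*y) * (Real.exp ((1-β')*s) * g s)
  rw [← Real.exp_add, show β'*(y-s)+s = β'*y + (1-β')*s by ring, Real.exp_add, mul_assoc]

lemma exp_shift (a b k g : ℝ) :
    Real.exp (-a) * (k * Real.exp b * g) = k * Real.exp (b-a) * g := by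
  rw [Real.exp_sub, Real.exp_neg]
  field_simp

/-- Identifiability of the parameter and of the unknown mechanism in the SemiPDE model
of Example 3: if the solutions agree a.e. on [0,1], then β = 1 and f = f₀ a.e. on [0,1]. -/
theorem identifiability (β : ℝ) (hβ : β ∈ Set.Icc (0:ℝ) 2)
    (f f₀ : ℝ → ℝ) (hfm : Measurable f) (hf₀m : Measurable f₀)
    (hfr : ∀ s ∈ Set.Icc (0:ℝ) 1, f s ∈ Set.Icc (1:ℝ) 2)
    (hf₀r : ∀ s ∈ Set.Icc (0:ℝ) 1, f₀ s ∈ Set.Icc (1:ℝ) 2)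
    (heq : ∀ᵐ x ∂(volume.restrict (Set.Icc (0:ℝ) 1)), u β f x = u 1 f₀ x) :
    β = 1 ∧ ∀ᵐ x ∂(volume.restrict (Set.Icc (0:ℝ) 1)), f x = f₀ x := by
  have h01 : (0:ℝ) ∈ Icc (0:ℝ) 1 := by norm_num
  set E : Set ℝ := Icc (0:ℝ) 1 ∩ {y | u β f y = u 1 f₀ y} with hE
  have hEc : volume.restrict (Icc (0:ℝ) 1) Eᶜ = 0 := by
    rw [hE, compl_inter]
    refine le_antisymm (le_trans (measure_union_le _ _) ?_) (zero_le)
    have h1 : volume.restrict (Icc (0:ℝ) 1) (Icc (0:ℝ) 1)ᶜ = 0 := by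
      rw [Measure.restrict_apply (measurableSet_Icc.compl), compl_inter_self]
      simp
    have h2 : volume.restrict (Icc (0:ℝ) 1) {y | u β f y = u 1 f₀ y}ᶜ = 0 := by
      rw [compl_setOf]; exact ae_iff.1 heq
    rw [h1, h2]; simp
  -- the two structural identities, valid on E
  have hΦ : ∀ y ∈ E, (∫ s in (0:ℝ)..y, Real.exp ((1-β)*s) * f s)
      = Real.exp ((1-β)*y) * ∫ s in (0:ℝ)..y, Real.exp (0*s) * f₀ s := by
    intro y hy
    have h1 : v β f y = v 1 f₀ y := by
      have := congrArg Prod.fst hy.2; simpa [u] using this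
    rw [v_eq, v_eq, show (1:ℝ)-1 = 0 by norm_num] at h1
    apply mul_left_cancel₀ (Real.exp_ne_zero (β*y))
    rw [h1, ← mul_assoc, ← Real.exp_add, show β*y + (1-β)*y = 1*y by ring]
  have hΨ : ∀ y ∈ E, (∫ s in (0:ℝ)..y, Real.exp ((1-2*β)*s) * f s)
      = Real.exp ((2-2*β)*y) * ∫ s in (0:ℝ)..y, Real.exp ((-1)*s) * f₀ s := by
    intro y hy
    have h1 : v (2*β) f y = v 2 f₀ y := by
      have := congrArg Prod.snd hy.2; simpa [u] using this
    rw [v_eq, v_eq, show (1:ℝ)-2 = -1 by norm_num, show (1:ℝ)-2*β = 1-2*β from rfl] at h1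
    apply mul_left_cancel₀ (Real.exp_ne_zero ((2*β)*y))
    rw [h1, ← mul_assoc, ← Real.exp_add, show (2*β)*y + (2-2*β)*y = 2*y by ring]
  -- bounds on the exponents
  have hc1 : |1-β| ≤ 3 := by rw [abs_le]; constructor <;> linarith [hβ.1, hβ.2]
  have hc2 : |1-2*β| ≤ 3 := by rw [abs_le]; constructor <;> linarith [hβ.1, hβ.2]
  have hc0 : |(0:ℝ)| ≤ 3 := by norm_num
  have hcm1 : |(-1:ℝ)| ≤ 3 := by norm_num
  -- choose a point x of E in (0,1)
  obtain ⟨x, hxE, hxI⟩ := exists_mem hEc (le_refl (0:ℝ)) (le_refl (1:ℝ)) one_pos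
  have hxIcc : x ∈ Icc (0:ℝ) 1 := ⟨hxI.1.le, hxI.2.le⟩
  set l : Filter ℝ := 𝓝[E ∩ Ioc x 1] x with hl
  haveI hnb : l.NeBot := cluster_right hEc ⟨hxI.1.le, hxI.2⟩
  have hl1 : l ≤ 𝓝[Ioc x 1] x := nhdsWithin_mono x inter_subset_right
  have hl2 : l ≤ 𝓝[Icc (0:ℝ) 1] x :=
    nhdsWithin_mono x (fun y hy => hy.1.1)
  have hmemE : ∀ᶠ y in l, y ∈ E ∩ Ioc x 1 := self_mem_nhdsWithin
  -- interval integrability shortcuts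
  have hIIf : ∀ (τ : ℝ), |τ| ≤ 3 → ∀ a ∈ Icc (0:ℝ) 1, ∀ b ∈ Icc (0:ℝ) 1,
      IntervalIntegrable (fun s => Real.exp (τ*s) * f s) volume a b :=
    fun τ hτ a ha b hb => II (exp_mul_measurable hfm τ) (exp_mul_bound hfr hτ) ha hb
  have hIIf0 : ∀ (τ : ℝ), |τ| ≤ 3 → ∀ a ∈ Icc (0:ℝ) 1, ∀ b ∈ Icc (0:ℝ) 1,
      IntervalIntegrable (fun s => Real.exp (τ*s) * f₀ s) volume a b :=
    fun τ hτ a ha b hb => II (exp_mul_measurable hf₀m τ) (exp_mul_bound hf₀r hτ) ha hb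
  -- limit of F₀ and G₀ along l
  have hF₀ : Tendsto (fun y => ∫ s in (0:ℝ)..y, Real.exp (0*s) * f₀ s) l
      (𝓝 (∫ s in (0:ℝ)..x, Real.exp (0*s) * f₀ s)) :=
    tendsto_prim hf₀m hf₀r hc0 hxIcc hl2
  have hG₀ : Tendsto (fun y => ∫ s in (0:ℝ)..y, Real.exp ((-1)*s) * f₀ s) l
      (𝓝 (∫ s in (0:ℝ)..x, Real.exp ((-1)*s) * f₀ s)) :=
    tendsto_prim hf₀m hf₀r hcm1 hxIcc hl2
  -- the two applications of tendsto_A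
  have hL1 : ∀ᶠ y in l, (∫ s in x..y, Real.exp ((1-β)*s) * f s)
      - Real.exp (((1-β)-0)*x) * ∫ s in x..y, Real.exp (0*s) * f₀ s
      = (Real.exp ((1-β)*y) - Real.exp ((1-β)*x))
          * (fun y => ∫ s in (0:ℝ)..y, Real.exp (0*s) * f₀ s) y := by
    filter_upwards [hmemE] with y hy
    have hyIcc : y ∈ Icc (0:ℝ) 1 := hy.1.1
    rw [← integral_interval_sub_left (hIIf _ hc1 0 h01 y hyIcc) (hIIf _ hc1 0 h01 x hxIcc),
      ← integral_interval_sub_left (hIIf0 _ hc0 0 h01 y hyIcc) (hIIf0 _ hc0 0 h01 x hxIcc),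
      hΦ y hy.1, hΦ x hxE, show (1-β)-(0:ℝ) = 1-β by ring]
    ring
  have hL2 : ∀ᶠ y in l, (∫ s in x..y, Real.exp ((1-2*β)*s) * f s)
      - Real.exp (((1-2*β)-(-1))*x) * ∫ s in x..y, Real.exp ((-1)*s) * f₀ s
      = (Real.exp ((2-2*β)*y) - Real.exp ((2-2*β)*x))
          * (fun y => ∫ s in (0:ℝ)..y, Real.exp ((-1)*s) * f₀ s) y := by
    filter_upwards [hmemE] with y hy
    have hyIcc : y ∈ Icc (0:ℝ) 1 := hy.1.1
    rw [← integral_interval_sub_left (hIIf _ hc2 0 h01 y hyIcc) (hIIf _ hc2 0 h01 x hxIcc),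
      ← integral_interval_sub_left (hIIf0 _ hcm1 0 h01 y hyIcc) (hIIf0 _ hcm1 0 h01 x hxIcc),
      hΨ y hy.1, hΨ x hxE, show (1-2*β)-(-1:ℝ) = 2-2*β by ring]
    ring
  have lim1 := tendsto_A hfm hf₀m hfr hf₀r (1-β) hc1 hc0 hxIcc hl1 hF₀ hL1
  have lim2 := tendsto_A hfm hf₀m hfr hf₀r (2-2*β) hc2 hcm1 hxIcc hl1 hG₀ hL2
  set F₀x := ∫ s in (0:ℝ)..x, Real.exp (0*s) * f₀ s with hF₀x
  set G₀x := ∫ s in (0:ℝ)..x, Real.exp ((-1)*s) * f₀ s with hG₀x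
  have huniq := tendsto_nhds_unique lim1 lim2
  have hkey : (1-β) * F₀x = (2-2*β) * Real.exp x * G₀x := by
    have e1 : Real.exp (-((1-β)*x)) * ((1-β) * Real.exp ((1-β)*x) * F₀x)
        = (1-β) * F₀x := by
      rw [exp_shift, sub_self, Real.exp_zero, mul_one]
    have e2 : Real.exp (-((1-2*β)*x)) * ((2-2*β) * Real.exp ((2-2*β)*x) * G₀x)
        = (2-2*β) * Real.exp x * G₀x := by
      rw [exp_shift, show (2-2*β)*x - (1-2*β)*x = x by ring]
    rw [← e1, ← e2]
    exact huniq
  -- bounds giving the contradiction when β ≠ 1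
  have hxF : x ≤ F₀x := by
    rw [hF₀x]
    have h1 : ∫ s in (0:ℝ)..x, (1:ℝ) ≤ ∫ s in (0:ℝ)..x, Real.exp (0*s) * f₀ s := by
      apply intervalIntegral.integral_mono_on hxI.1.le intervalIntegrable_const
        (hIIf0 0 hc0 0 h01 x hxIcc)
      intro s hs
      have hs1 : s ∈ Icc (0:ℝ) 1 := ⟨hs.1, hs.2.trans hxI.2.le⟩
      rw [zero_mul, Real.exp_zero, one_mul]
      exact (hf₀r s hs1).1
    simpa using h1
  have hFG : F₀x ≤ Real.exp x * G₀x := by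
    rw [hF₀x, hG₀x, ← intervalIntegral.integral_const_mul]
    apply intervalIntegral.integral_mono_on hxI.1.le (hIIf0 0 hc0 0 h01 x hxIcc)
      ((hIIf0 (-1) hcm1 0 h01 x hxIcc).const_mul _)
    intro s hs
    have hs1 : s ∈ Icc (0:ℝ) 1 := ⟨hs.1, hs.2.trans hxI.2.le⟩
    rw [zero_mul, Real.exp_zero, one_mul, ← mul_assoc, ← Real.exp_add]
    have hf₀pos : 0 ≤ f₀ s := le_trans zero_le_one (hf₀r s hs1).1
    have : (1:ℝ) ≤ Real.exp (x + (-1)*s) := by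
      calc (1:ℝ) = Real.exp 0 := (Real.exp_zero).symm
      _ ≤ Real.exp (x + (-1)*s) := Real.exp_le_exp.2 (by linarith [hs.2])
    nlinarith
  have hβ1 : β = 1 := by
    by_contra hβne
    have hcne : (1:ℝ) - β ≠ 0 := fun h => hβne (by linarith)
    have h5 : F₀x = 2 * (Real.exp x * G₀x) :=
      mul_left_cancel₀ hcne (hkey.trans (by ring))
    linarith [hxI.1]
  refine ⟨hβ1, ?_⟩
  subst hβ1
  have hPE : ∀ y ∈ E, (∫ s in (0:ℝ)..y, f s) = ∫ s in (0:ℝ)..y, f₀ s := by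
    intro y hy
    have h := hΦ y hy
    simp only [show (1:ℝ)-1 = 0 by norm_num, zero_mul, Real.exp_zero, one_mul] at h
    exact h
  have hP : ∀ t ∈ Icc (0:ℝ) 1, (∫ s in (0:ℝ)..t, f s) = ∫ s in (0:ℝ)..t, f₀ s := by
    intro t ht
    rcases eq_or_lt_of_le ht.1 with h0 | h0
    · rw [← h0, intervalIntegral.integral_same, intervalIntegral.integral_same]
    · set l' : Filter ℝ := 𝓝[E ∩ Ioo 0 t] t with hl'
      haveI : l'.NeBot := cluster_left hEc ⟨h0, ht.2⟩
      have hl2' : l' ≤ 𝓝[Icc (0:ℝ) 1] t := nhdsWithin_mono t (fun y hy => hy.1.1)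
      have t1 := tendsto_prim hfm hfr hc0 ht hl2'
      have t2 := tendsto_prim hf₀m hf₀r hc0 ht hl2'
      simp only [zero_mul, Real.exp_zero, one_mul] at t1 t2
      have hev : (fun y => ∫ s in (0:ℝ)..y, f s) =ᶠ[l'] fun y => ∫ s in (0:ℝ)..y, f₀ s := by
        filter_upwards [self_mem_nhdsWithin] with y hy using hPE y hy.1
      exact tendsto_nhds_unique (t1.congr' hev) t2
  exact final_ae hfm hf₀m hfr hf₀r hP
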